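/- arXiv:2003.00592 — 2 statements merged into one kernel-verified Lean document; each statement's English description precedes it below -/
import Mathlib

section
/- Let C be a small category, let A ∈ Ĉ, and let G be a limit-preserving presheaf of sets on Ĉ. Then there is a bijection, natural in A and G, between the set of natural transformations Nat(Lan_{y^op} A, G) and the set G(A), where Lan_{y^op} A denotes the left Kan extension of A : C^op → Set along the opposite Yoneda embedding y^op : C^op → Ĉ^op. -/
universe u

open CategoryTheory CategoryTheory.Limits Opposite

/-- A family of morphisms `{fᵢ : cᵢ ⟶ c}` indexed by a (small) set. -/
structure CoverFamily (C : Type u) [CategoryTheory.SmallCategory C] (c : C) : Type (u + 1) where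
  ι : Type u
  obj : ι → C
  map : ∀ i : ι, obj i ⟶ c

/-- A coverage (Grothendieck pretopology) in the sense of the paper:
identity families are coverings, and coverings admit weak pullbacks. -/
structure PaperCoverage (C : Type u) [CategoryTheory.SmallCategory C] : Type (u + 1) where
  covers : ∀ c : C, Set (CoverFamily C c)
  id_mem : ∀ c : C, (⟨PUnit, fun _ => c, fun _ => 𝟙 c⟩ : CoverFamily C c) ∈ covers c
  pullback_compat : ∀ {c c' : C} (g : c' ⟶ c) (fam : CoverFamily C c), fam ∈ covers c →
    ∃ fam' ∈ covers c', ∀ j : fam'.ι, ∃ (i : fam.ι) (h : fam'.obj j ⟶ fam.obj i),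
      h ≫ fam.map i = fam'.map j ≫ g

variable {C : Type u} [SmallCategory C]

/-- A morphism `π : Y ⟶ X` of presheaves is a `τ`-local epimorphism if every
morphism `y(c) ⟶ X` admits local lifts through `π` along some covering family of `c`. -/
def IsLocalEpi (τ : PaperCoverage C) {Y X : Cᵒᵖ ⥤ Type u} (π : Y ⟶ X) : Prop :=
  ∀ (c : C) (φ : yoneda.obj c ⟶ X),
    ∃ fam ∈ τ.covers c, ∀ j : fam.ι,
      ∃ φj : yoneda.obj (fam.obj j) ⟶ Y, φj ≫ π = yoneda.map (fam.map j) ≫ φ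

/-- A presheaf of sets `G` on `Ĉ` is limit-preserving if it sends colimits in `Ĉ` to
limits in `Set`: for every small diagram `D`, the canonical comparison cone obtained by
applying `G` to the colimit cocone of `D` is a limit cone. -/
def LimitPreserving (G : (Cᵒᵖ ⥤ Type u)ᵒᵖ ⥤ Type u) : Prop :=
  ∀ (J : Type u) (_ : SmallCategory J) (D : J ⥤ Cᵒᵖ ⥤ Type u),
    Nonempty (Limits.IsLimit (G.mapCone (Limits.colimit.cocone D).op))

/-- The canonical map `G(A) → Nat(A, yᵒᵖ ⋙ G)`. -/
noncomputable def invMap (A : Cᵒᵖ ⥤ Type u) (G : (Cᵒᵖ ⥤ Type u)ᵒᵖ ⥤ Type u)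
    (x : G.obj (op A)) : A ⟶ yoneda.op ⋙ G where
  app c := TypeCat.ofHom fun a => G.map (yonedaEquiv.symm a).op x
  naturality c c' g := by
    ext a
    dsimp
    rw [yonedaEquiv_symm_map, op_comp, G.map_comp]
    rfl

lemma invMap_natural_left {A A' : Cᵒᵖ ⥤ Type u} (f : A ⟶ A')
    (G : (Cᵒᵖ ⥤ Type u)ᵒᵖ ⥤ Type u) (x : G.obj (op A')) :
    invMap A G (G.map f.op x) = f ≫ invMap A' G x := by
  ext c a
  dsimp [invMap]
  rw [← FunctorToTypes.map_comp_apply, ← op_comp, yonedaEquiv_symm_naturality_right]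

lemma invMap_natural_right (A : Cᵒᵖ ⥤ Type u) {G G' : (Cᵒᵖ ⥤ Type u)ᵒᵖ ⥤ Type u}
    (σ : G ⟶ G') (x : G.obj (op A)) :
    invMap A G' (σ.app (op A) x) = invMap A G x ≫ Functor.whiskerLeft yoneda.op σ := by
  ext c a
  dsimp [invMap]
  exact (FunctorToTypes.naturality σ _ x).symm

/-- The canonical diagram of representables over `A`, with plain `yoneda`. -/
abbrev repDiagram (A : Cᵒᵖ ⥤ Type u) : A.Elementsᵒᵖ ⥤ Cᵒᵖ ⥤ Type u :=
  (CategoryOfElements.costructuredArrowYonedaEquivalence A).functor ⋙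
    CostructuredArrow.proj yoneda A ⋙ yoneda

/-- Natural transformations `A ⟶ yᵒᵖ ⋙ G` are the sections of `D.op ⋙ G`, where
`D` is the canonical diagram of representables with colimit `A`. -/
def natEquivSections (A : Cᵒᵖ ⥤ Type u) (G : (Cᵒᵖ ⥤ Type u)ᵒᵖ ⥤ Type u) :
    (A ⟶ yoneda.op ⋙ G) ≃ ((repDiagram A).op ⋙ G).sections where
  toFun η := ⟨fun j => η.app j.unop.unop.1 j.unop.unop.2, by
    intro j j' g
    have h := ConcreteCategory.congr_hom (η.naturality g.unop.unop.val) j.unop.unop.2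
    dsimp at h ⊢
    exact h.symm.trans (congrArg (η.app _) g.unop.unop.property)⟩
  invFun s :=
    { app := fun c => TypeCat.ofHom fun a => s.val (op (op ⟨c, a⟩))
      naturality := fun c c' g => by
        ext a
        exact (s.property
          (Quiver.Hom.op (Quiver.Hom.op (CategoryOfElements.homMk
            (A.elementsMk c a) (A.elementsMk c' (A.map g a)) g rfl)))).symm }
  left_inv η := rfl
  right_inv s := rfl

lemma invMap_bijective (A : Cᵒᵖ ⥤ Type u) (G : (Cᵒᵖ ⥤ Type u)ᵒᵖ ⥤ Type u)
    (hG : LimitPreserving G) : Function.Bijective (invMap A G) := by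
  obtain ⟨hL⟩ := hG _ _ (repDiagram A)
  set D := repDiagram A with hD
  let sec := Types.isLimitEquivSections hL
  let iso : A ≅ colimit D :=
    ((Presheaf.isColimitTautologicalCocone A).whiskerEquivalence
      (CategoryOfElements.costructuredArrowYonedaEquivalence A)).coconePointUniqueUpToIso
      (colimit.isColimit D)
  have key : ∀ x, (natEquivSections A G) (invMap A G x) = sec (G.map iso.inv.op x) := by
    intro x
    apply Subtype.ext
    funext j
    show G.map (yonedaEquiv.symm j.unop.unop.2).op x
      = G.map ((colimit.cocone D).ι.app j.unop).op (G.map iso.inv.op x)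
    rw [← FunctorToTypes.map_comp_apply, ← op_comp]
    erw [IsColimit.comp_coconePointUniqueUpToIso_inv]
    rfl
  have heq : invMap A G
      = ⇑((G.mapIso iso.op).toEquiv.symm.trans (sec.trans (natEquivSections A G).symm)) := by
    funext x
    apply (natEquivSections A G).injective
    rw [key x]
    show _ = (natEquivSections A G) ((natEquivSections A G).symm (sec (G.map iso.op.inv x)))
    rw [Equiv.apply_symm_apply]
    rfl
  rw [heq]
  exact Equiv.bijective _

/-- The bijection `Nat(Lan_{yᵒᵖ} A, G) ≃ G(A)`. -/
noncomputable def theEquiv (A : Cᵒᵖ ⥤ Type u) (G : (Cᵒᵖ ⥤ Type u)ᵒᵖ ⥤ Type u)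
    (hG : LimitPreserving G) :
    ((Functor.lan (yoneda.op : Cᵒᵖ ⥤ (Cᵒᵖ ⥤ Type u)ᵒᵖ)).obj A ⟶ G) ≃ G.obj (op A) :=
  ((Functor.lanAdjunction (yoneda.op : Cᵒᵖ ⥤ (Cᵒᵖ ⥤ Type u)ᵒᵖ) (Type u)).homEquiv A G).trans
    (Equiv.ofBijective _ (invMap_bijective A G hG)).symm

lemma invMap_theEquiv (A : Cᵒᵖ ⥤ Type u) (G : (Cᵒᵖ ⥤ Type u)ᵒᵖ ⥤ Type u)
    (hG : LimitPreserving G) (t : (Functor.lan (yoneda.op : Cᵒᵖ ⥤ (Cᵒᵖ ⥤ Type u)ᵒᵖ)).obj A ⟶ G) :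
    invMap A G (theEquiv A G hG t)
      = ((Functor.lanAdjunction (yoneda.op : Cᵒᵖ ⥤ (Cᵒᵖ ⥤ Type u)ᵒᵖ) (Type u)).homEquiv A G) t :=
  Equiv.ofBijective_apply_symm_apply _ (invMap_bijective A G hG) _


/-- For `A ∈ Ĉ` and `G` a limit-preserving presheaf of sets on `Ĉ`,
there is a bijection `Nat(Lan_{yᵒᵖ} A, G) ≃ G(A)`, natural in `A` and in `G`. -/
theorem natTrans_lan_equiv_eval :
    ∃ e : ∀ (A : Cᵒᵖ ⥤ Type u) (G : (Cᵒᵖ ⥤ Type u)ᵒᵖ ⥤ Type u), LimitPreserving G →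
        (((Functor.lan (yoneda.op : Cᵒᵖ ⥤ (Cᵒᵖ ⥤ Type u)ᵒᵖ)).obj A ⟶ G) ≃
          G.obj (Opposite.op A)),
      (∀ (A A' : Cᵒᵖ ⥤ Type u) (f : A ⟶ A') (G : (Cᵒᵖ ⥤ Type u)ᵒᵖ ⥤ Type u)
          (hG : LimitPreserving G)
          (t : (Functor.lan (yoneda.op : Cᵒᵖ ⥤ (Cᵒᵖ ⥤ Type u)ᵒᵖ)).obj A' ⟶ G),
        e A G hG ((Functor.lan (yoneda.op : Cᵒᵖ ⥤ (Cᵒᵖ ⥤ Type u)ᵒᵖ)).map f ≫ t) =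
          G.map f.op (e A' G hG t)) ∧
      (∀ (A : Cᵒᵖ ⥤ Type u) (G G' : (Cᵒᵖ ⥤ Type u)ᵒᵖ ⥤ Type u) (σ : G ⟶ G')
          (hG : LimitPreserving G) (hG' : LimitPreserving G')
          (t : (Functor.lan (yoneda.op : Cᵒᵖ ⥤ (Cᵒᵖ ⥤ Type u)ᵒᵖ)).obj A ⟶ G),
        e A G' hG' (t ≫ σ) = σ.app (Opposite.op A) (e A G hG t)) := by
  
  refine ⟨theEquiv, ?_, ?_⟩
  · intro A A' f G hG t
    apply (invMap_bijective A G hG).injective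
    rw [invMap_theEquiv, Adjunction.homEquiv_naturality_left, invMap_natural_left,
      invMap_theEquiv]
  · intro A G G' σ hG hG' t
    apply (invMap_bijective A G' hG').injective
    rw [invMap_theEquiv, Adjunction.homEquiv_naturality_right, invMap_natural_right,
      invMap_theEquiv]
    rfl
end

section
/- Let C be a small category. The functor from PSh(C) to PSh(Ĉ) given by F ↦ Hom_Ĉ(−, F) (the right Kan extension along the opposite Yoneda embedding) is fully faithful, and a presheaf of sets G on Ĉ lies in its essential image if and only if G is limit-preserving. Consequently, F ↦ Hom_Ĉ(−, F) and restriction along the Yoneda embedding, G ↦ (c ↦ G(y(c))), are mutually quasi-inverse equivalences between PSh(C) and the full subcategory of PSh(Ĉ) on the limit-preserving presheaves. -/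
universe u

open CategoryTheory CategoryTheory.Limits Opposite

variable {C : Type u} [SmallCategory C]

section Aux

variable {C : Type u} [SmallCategory C]

/-- A limit-preserving presheaf on `Ĉ` preserves all small limits. -/
lemma preservesLimits_of_limitPreserving {G : (Cᵒᵖ ⥤ Type u)ᵒᵖ ⥤ Type u}
    (hG : LimitPreserving G) : PreservesLimitsOfSize.{u, u} G := by
  have key : ∀ (J' : Type u) (_ : SmallCategory J'), PreservesLimitsOfShape J'ᵒᵖ G := by
    intro J' _
    constructor
    intro K
    exact preservesLimit_of_preserves_limit_cone
      ((colimit.isColimit K.unop).op) ((hG J' _ K.unop).some)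
  constructor
  intro J _
  have := key Jᵒᵖ inferInstance
  exact preservesLimitsOfShape_of_equiv (opOpEquivalence J) G

lemma limitPreserving_yoneda (F : Cᵒᵖ ⥤ Type u) : LimitPreserving (yoneda.obj F) :=
  fun _ _ D => ⟨isLimitOfPreserves (yoneda.obj F) ((colimit.isColimit D).op)⟩

lemma limitPreserving_of_iso {G₁ G₂ : (Cᵒᵖ ⥤ Type u)ᵒᵖ ⥤ Type u} (i : G₁ ≅ G₂)
    (h : LimitPreserving G₁) : LimitPreserving G₂ :=
  fun J _ D => ⟨IsLimit.mapConeEquiv i ((h J _ D).some)⟩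

/-- The hard direction: a limit-preserving presheaf on `Ĉ` is representable. -/
lemma exists_repr {G : (Cᵒᵖ ⥤ Type u)ᵒᵖ ⥤ Type u} (hG : LimitPreserving G) :
    ∃ F : Cᵒᵖ ⥤ Type u, Nonempty (yoneda.obj F ≅ G) := by
  have h1 : PreservesLimitsOfSize.{u, u} G := preservesLimits_of_limitPreserving hG
  have h2 : PreservesColimitsOfSize.{u, u} G.rightOp :=
    preservesColimitsOfSize_rightOp G
  have h3 : G.rightOp.IsLeftAdjoint :=
    Presheaf.isLeftAdjoint_of_preservesColimits.{0} G.rightOp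
  let adj := Adjunction.ofIsLeftAdjoint G.rightOp
  let F : Cᵒᵖ ⥤ Type u := G.rightOp.rightAdjoint.obj (op PUnit.{u + 1})
  let rep : (G.rightOp.op ⋙ yoneda.obj (op PUnit.{u + 1})).RepresentableBy F :=
    adj.representableBy (op PUnit.{u + 1})
  have iso : G.rightOp.op ⋙ yoneda.obj (op PUnit.{u + 1}) ≅ G :=
    NatIso.ofComponents
      (fun X => Equiv.toIso (((opEquiv _ _).trans TypeCat.homEquiv).trans (Equiv.funUnique PUnit _)))
      (by intro X Y f; ext g; simp [opEquiv])
  exact ⟨F, ⟨(rep.ofIso iso).toIso⟩⟩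

/-- Restriction of `Hom(−, X)` along the Yoneda embedding recovers `X`. -/
noncomputable def restrictYonedaIso (X : Cᵒᵖ ⥤ Type u) :
    yoneda.op ⋙ yoneda.obj X ≅ X :=
  (yonedaOpCompYonedaObj X).trans
    (NatIso.ofComponents (fun c => Equiv.toIso Equiv.ulift) (by aesop_cat))

end Aux

/-- The functor `PSh(C) ⥤ PSh(Ĉ)`, `F ↦ Hom_Ĉ(−, F)` (the right Kan
extension along the opposite Yoneda embedding, i.e. the Yoneda embedding of `Ĉ`), is
fully faithful, and a presheaf of sets on `Ĉ` lies in its essential image if and only if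
it is limit-preserving.  Consequently `F ↦ Hom_Ĉ(−, F)` and restriction along the Yoneda
embedding, `G ↦ (c ↦ G(y(c)))`, are mutually quasi-inverse equivalences between `PSh(C)`
and the full subcategory of `PSh(Ĉ)` on the limit-preserving presheaves. -/
theorem homFunctor_fullyFaithful_essImage_limitPreserving :
    (yoneda : (Cᵒᵖ ⥤ Type u) ⥤ ((Cᵒᵖ ⥤ Type u)ᵒᵖ ⥤ Type u)).Full ∧
    (yoneda : (Cᵒᵖ ⥤ Type u) ⥤ ((Cᵒᵖ ⥤ Type u)ᵒᵖ ⥤ Type u)).Faithful ∧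
    (∀ G : (Cᵒᵖ ⥤ Type u)ᵒᵖ ⥤ Type u,
      (∃ F : Cᵒᵖ ⥤ Type u, Nonempty (yoneda.obj F ≅ G)) ↔ LimitPreserving G) ∧
    ∃ e : (Cᵒᵖ ⥤ Type u) ≌
        ObjectProperty.FullSubcategory (fun G : (Cᵒᵖ ⥤ Type u)ᵒᵖ ⥤ Type u => LimitPreserving G),
      (∀ F : Cᵒᵖ ⥤ Type u, Nonempty ((e.functor.obj F).obj ≅ yoneda.obj F)) ∧
      (∀ G, Nonempty (e.inverse.obj G ≅ yoneda.op ⋙ G.obj)) := by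
  have hFull : (yoneda : (Cᵒᵖ ⥤ Type u) ⥤ ((Cᵒᵖ ⥤ Type u)ᵒᵖ ⥤ Type u)).Full :=
    inferInstance
  have hFaithful : (yoneda : (Cᵒᵖ ⥤ Type u) ⥤ ((Cᵒᵖ ⥤ Type u)ᵒᵖ ⥤ Type u)).Faithful :=
    inferInstance
  refine ⟨hFull, hFaithful, ?_, ?_⟩
  · intro G
    constructor
    · rintro ⟨F, ⟨i⟩⟩
      exact limitPreserving_of_iso i (limitPreserving_yoneda F)
    · exact exists_repr
  · -- the equivalence
    let P := fun G : (Cᵒᵖ ⥤ Type u)ᵒᵖ ⥤ Type u => LimitPreserving G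
    let Φ : (Cᵒᵖ ⥤ Type u) ⥤ ObjectProperty.FullSubcategory P :=
      ObjectProperty.lift P yoneda limitPreserving_yoneda
    have : Φ.EssSurj := by
      constructor
      intro G
      obtain ⟨F, ⟨i⟩⟩ := exists_repr G.2
      exact ⟨F, ⟨(ObjectProperty.ι P).preimageIso i⟩⟩
    have : Φ.IsEquivalence := {}
    refine ⟨Φ.asEquivalence, fun F => ⟨Iso.refl _⟩, fun G => ?_⟩
    refine ⟨((restrictYonedaIso _).symm).trans (Functor.isoWhiskerLeft yoneda.op ?_)⟩
    exact (ObjectProperty.ι P).mapIso (Φ.asEquivalence.counitIso.app G)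
end
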